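/- For every prefix p ∈ Γ* and every m ∈ ℕ⁺: Ã^p_m ⊨ φ̃_p and B̃^p_m ⊭ φ̃_p. -/

import Mathlib

namespace QSH

open FirstOrder Language

/-! ### Γ-labelled forests -/

/-- The two quantifier labels `∃` and `∀` (the set Γ). -/
inductive Quant : Type where
  | ex : Quant
  | fa : Quant
deriving DecidableEq

instance : Fintype Quant := ⟨{Quant.ex, Quant.fa}, fun x => by cases x <;> simp⟩

instance : Inhabited Quant := ⟨.ex⟩

/-- A Γ-labelled directed graph: a type of nodes, an arc relation
(directed from parent to child) and a labelling of nodes by `∃`/`∀`.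
Γ-labelled forests and quantifier structures of formulas are such graphs. -/
structure QGraph : Type 1 where
  V : Type
  arc : V → V → Prop
  lab : V → Quant

/-- `S₁ ⪯ₑ S₂`: there is a (not necessarily injective) label-preserving map `ι`
from the nodes of `S₁` to the nodes of `S₂` such that whenever `S₁` has an arc
from `x` to `y`, `S₂` has a nontrivial directed path from `ι x` to `ι y`. -/
def QGraph.Embeds (S₁ S₂ : QGraph) : Prop :=
  ∃ ι : S₁.V → S₂.V,
    (∀ v, S₂.lab (ι v) = S₁.lab v) ∧
    ∀ x y, S₁.arc x y → Relation.TransGen S₂.arc (ι x) (ι y)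

/-- `W(S)`: the set of words in Γ* that are subsequences of the label-words
read along directed paths of `S`. -/
def QGraph.Words (S : QGraph) : Set (List Quant) :=
  { w | ∃ l : List S.V, l.Chain' S.arc ∧ w.Sublist (l.map S.lab) }

/-- Isomorphism of Γ-labelled graphs ("having the same quantifier structure"). -/
def QGraph.Iso (G H : QGraph) : Prop :=
  ∃ e : G.V ≃ H.V, (∀ v, H.lab (e v) = G.lab v) ∧ ∀ x y, G.arc x y ↔ H.arc (e x) (e y)

/-- A root: a node with no incoming arc. -/
def QGraph.isRoot (S : QGraph) (v : S.V) : Prop := ∀ w, ¬ S.arc w v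

/-- The empty Γ-labelled graph. -/
def QGraph.empty : QGraph :=
  ⟨Empty, fun _ _ => False, fun x => x.elim⟩

/-- Disjoint union of two Γ-labelled graphs. -/
def QGraph.union (G H : QGraph) : QGraph where
  V := G.V ⊕ H.V
  arc := Sum.LiftRel G.arc H.arc
  lab := Sum.elim G.lab H.lab

/-- Add a new root labelled `q`, with an arc to each root of `G`. -/
def QGraph.addRoot (q : Quant) (G : QGraph) : QGraph where
  V := Option G.V
  arc x y :=
    match x, y with
    | some a, some b => G.arc a b
    | none, some b => G.isRoot b
    | _, none => False
  lab x := x.elim q G.lab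

/-- A finite Γ-labelled forest: a finite Γ-labelled digraph in which every node
has at most one parent and which has no directed cycles, i.e. a finite disjoint
union of rooted trees with arcs directed from parent to child. -/
structure LForest : Type 1 extends QGraph where
  finV : Finite V
  parent_unique : ∀ ⦃x y z : V⦄, arc x z → arc y z → x = y
  acyclic : ∀ x : V, ¬ Relation.TransGen arc x x

/-! ### First-order formulas in negation normal form, their semantics, and
their quantifier structures -/

universe u v w

/-- Realization of a term, with the structure as explicit data. -/
def TermRealize {L : FirstOrder.Language.{u, v}} {M : Type w} (str : L.Structure M) {α : Type*}
    (vmap : α → M) : L.Term α → M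
  | .var a => vmap a
  | .func f ts => str.funMap f fun i => TermRealize str vmap (ts i)

/-- First-order formulas in negation normal form with free variables among `Fin n`. -/
inductive NNF (L : FirstOrder.Language.{u, v}) : ℕ → Type (max u v) where
  | verum {n : ℕ} : NNF L n
  | falsum {n : ℕ} : NNF L n
  | eq {n : ℕ} (t₁ t₂ : L.Term (Fin n)) : NNF L n
  | ne {n : ℕ} (t₁ t₂ : L.Term (Fin n)) : NNF L n
  | rel {n m : ℕ} (R : L.Relations m) (ts : Fin m → L.Term (Fin n)) : NNF L n
  | nrel {n m : ℕ} (R : L.Relations m) (ts : Fin m → L.Term (Fin n)) : NNF L n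
  | conj {n : ℕ} (φ ψ : NNF L n) : NNF L n
  | disj {n : ℕ} (φ ψ : NNF L n) : NNF L n
  | ex {n : ℕ} (φ : NNF L (n + 1)) : NNF L n
  | fa {n : ℕ} (φ : NNF L (n + 1)) : NNF L n

/-- Tarskian satisfaction for `NNF` formulas. -/
def NNF.Realize {L : FirstOrder.Language.{u, v}} {M : Type w} (str : L.Structure M) :
    ∀ {n : ℕ}, NNF L n → (Fin n → M) → Prop
  | _, .verum, _ => True
  | _, .falsum, _ => False
  | _, .eq t₁ t₂, vv => TermRealize str vv t₁ = TermRealize str vv t₂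
  | _, .ne t₁ t₂, vv => TermRealize str vv t₁ ≠ TermRealize str vv t₂
  | _, .rel R ts, vv => str.RelMap R fun i => TermRealize str vv (ts i)
  | _, .nrel R ts, vv => ¬ str.RelMap R fun i => TermRealize str vv (ts i)
  | _, .conj φ ψ, vv => φ.Realize str vv ∧ ψ.Realize str vv
  | _, .disj φ ψ, vv => φ.Realize str vv ∨ ψ.Realize str vv
  | _, .ex φ, vv => ∃ x : M, φ.Realize str (Fin.snoc vv x)
  | _, .fa φ, vv => ∀ x : M, φ.Realize str (Fin.snoc vv x)

/-- The quantifier structure `qs φ` of an NNF formula: empty for literals,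
disjoint union for conjunction/disjunction, and a new labelled root
above `qs` of the body for quantifiers. -/
def NNF.qs {L : FirstOrder.Language.{u, v}} : ∀ {n : ℕ}, NNF L n → QGraph
  | _, .verum => QGraph.empty
  | _, .falsum => QGraph.empty
  | _, .eq _ _ => QGraph.empty
  | _, .ne _ _ => QGraph.empty
  | _, .rel _ _ => QGraph.empty
  | _, .nrel _ _ => QGraph.empty
  | _, .conj φ ψ => φ.qs.union ψ.qs
  | _, .disj φ ψ => φ.qs.union ψ.qs
  | _, .ex φ => φ.qs.addRoot .ex
  | _, .fa φ => φ.qs.addRoot .fa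

/-- Renaming of free variables. -/
def NNF.relabel {L : FirstOrder.Language.{u, v}} : ∀ {n k : ℕ}, NNF L n → (Fin n → Fin k) → NNF L k
  | _, _, .verum, _ => .verum
  | _, _, .falsum, _ => .falsum
  | _, _, .eq t₁ t₂, f => .eq (t₁.relabel f) (t₂.relabel f)
  | _, _, .ne t₁ t₂, f => .ne (t₁.relabel f) (t₂.relabel f)
  | _, _, .rel R ts, f => .rel R fun i => (ts i).relabel f
  | _, _, .nrel R ts, f => .nrel R fun i => (ts i).relabel f
  | _, _, .conj φ ψ, f => .conj (φ.relabel f) (ψ.relabel f)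
  | _, _, .disj φ ψ, f => .disj (φ.relabel f) (ψ.relabel f)
  | _, _, .ex φ, f => .ex (φ.relabel (Fin.snoc (fun i => (f i).castSucc) (Fin.last _)))
  | _, _, .fa φ, f => .fa (φ.relabel (Fin.snoc (fun i => (f i).castSucc) (Fin.last _)))

/-- Substitution of terms for free variables. -/
def NNF.subst {L : FirstOrder.Language.{u, v}} :
    ∀ {n k : ℕ}, NNF L n → (Fin n → L.Term (Fin k)) → NNF L k
  | _, _, .verum, _ => .verum
  | _, _, .falsum, _ => .falsum
  | _, _, .eq t₁ t₂, f => .eq (t₁.subst f) (t₂.subst f)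
  | _, _, .ne t₁ t₂, f => .ne (t₁.subst f) (t₂.subst f)
  | _, _, .rel R ts, f => .rel R fun i => (ts i).subst f
  | _, _, .nrel R ts, f => .nrel R fun i => (ts i).subst f
  | _, _, .conj φ ψ, f => .conj (φ.subst f) (ψ.subst f)
  | _, _, .disj φ ψ, f => .disj (φ.subst f) (ψ.subst f)
  | _, _, .ex φ, f =>
      .ex (φ.subst (Fin.snoc (fun i => (f i).relabel Fin.castSucc) (Term.var (Fin.last _))))
  | _, _, .fa φ, f =>
      .fa (φ.subst (Fin.snoc (fun i => (f i).relabel Fin.castSucc) (Term.var (Fin.last _))))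

/-! ### Concrete signatures -/

/-- The relation symbols of the signature `τ = ⟨E⟩` of digraphs. -/
inductive TauRel : ℕ → Type where
  | E : TauRel 2

/-- The signature `τ = ⟨E⟩` of digraphs: one binary relation symbol. -/
def tau : FirstOrder.Language := ⟨fun _ => Empty, TauRel⟩

/-- The function symbols of `τ⁺`: the single constant `r`. -/
inductive TauPlusFun : ℕ → Type where
  | r : TauPlusFun 0

/-- The relation symbols of `τ⁺`: `U` unary, `R`, `B` binary. -/
inductive TauPlusRel : ℕ → Type where
  | U : TauPlusRel 1
  | R : TauPlusRel 2
  | B : TauPlusRel 2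

/-- The signature `τ⁺ = ⟨U, R, B, r⟩`. -/
def tauPlus : FirstOrder.Language := ⟨TauPlusFun, TauPlusRel⟩

/-- The relation symbols of `τ⁺ᴼᴿᴰ`: those of `τ⁺` together with `≤`. -/
inductive TauPlusOrdRel : ℕ → Type where
  | U : TauPlusOrdRel 1
  | R : TauPlusOrdRel 2
  | B : TauPlusOrdRel 2
  | le : TauPlusOrdRel 2

/-- The signature `τ⁺ᴼᴿᴰ = ⟨U, R, B, r, ≤⟩`. -/
def tauPlusOrd : FirstOrder.Language := ⟨TauPlusFun, TauPlusOrdRel⟩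

/-- The relation symbols of `⟨E, ≤⟩`. -/
inductive TauOrdRel : ℕ → Type where
  | E : TauOrdRel 2
  | le : TauOrdRel 2

/-- The signature `⟨E, ≤⟩` of ordered digraphs. -/
def tauOrd : FirstOrder.Language := ⟨fun _ => Empty, TauOrdRel⟩

/-- A bundled finite `L`-structure. -/
structure FinStr (L : FirstOrder.Language.{u, v}) where
  carrier : Type
  fin : Finite carrier
  str : L.Structure carrier

/-- Satisfaction of an NNF sentence in a bundled finite structure. -/
def FinStr.Sat {L : FirstOrder.Language.{u, v}} (M : FinStr L) (φ : NNF L 0) : Prop :=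
  φ.Realize M.str fun i => i.elim0

/-- `r` is a linear order (transitive, antisymmetric and total). -/
def IsLinearOrderRel {M : Type*} (r : M → M → Prop) : Prop :=
  (∀ x y z, r x y → r y z → r x z) ∧ (∀ x y, r x y → r y x → x = y) ∧ (∀ x y, r x y ∨ r y x)

/-! ### The Ehrenfeucht–Fraïssé style game `G_S(𝔄, 𝔅)` -/

/-- `(as, bs)` defines a partial isomorphism between `A` and `B`: the map sending
the interpretations of the constants (more generally, of all closed terms in the
picked elements) of `A` to those of `B` preserves equalities and all relations. -/
def PIso {L : FirstOrder.Language.{u, v}} {A : Type*} {B : Type*} (sA : L.Structure A)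
    (sB : L.Structure B) {t : ℕ} (as : Fin t → A) (bs : Fin t → B) : Prop :=
  (∀ t₁ t₂ : L.Term (Fin t),
      TermRealize sA as t₁ = TermRealize sA as t₂ ↔
        TermRealize sB bs t₁ = TermRealize sB bs t₂) ∧
  (∀ (m : ℕ) (R : L.Relations m) (ts : Fin m → L.Term (Fin t)),
      (sA.RelMap R fun i => TermRealize sA as (ts i)) ↔
        (sB.RelMap R fun i => TermRealize sB bs (ts i)))

/-- The history of a play (the pairs of elements picked so far, in order)
defines a partial isomorphism. -/
def HistOK {L : FirstOrder.Language.{u, v}} {A B : Type*} (sA : L.Structure A) (sB : L.Structure B)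
    (h : List (A × B)) : Prop :=
  PIso sA sB (fun i : Fin h.length => (h.get i).1) (fun i : Fin h.length => (h.get i).2)

/-- The duplicator can survive (at least) `k` more rounds of the game, the token
being on node `v` and `h` being the history of picked pairs: in the round at `v`,
if `v` is labelled `∃` the spoiler picks in `A` and the duplicator answers in `B`
(dually for `∀`); the extended history must still be a partial isomorphism, and
she must survive whichever child of `v` the spoiler moves the token to. -/
def DWinN {L : FirstOrder.Language.{u, v}} {A B : Type*} (S : QGraph) (sA : L.Structure A)
    (sB : L.Structure B) : ℕ → S.V → List (A × B) → Prop
  | 0, _, _ => True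
  | k + 1, v, h =>
    match S.lab v with
    | .ex => ∀ a : A, ∃ b : B, HistOK sA sB (h ++ [(a, b)]) ∧
        ∀ w : S.V, S.arc v w → DWinN S sA sB k w (h ++ [(a, b)])
    | .fa => ∀ b : B, ∃ a : A, HistOK sA sB (h ++ [(a, b)]) ∧
        ∀ w : S.V, S.arc v w → DWinN S sA sB k w (h ++ [(a, b)])

/-- The duplicator has a winning strategy in the game `G_S(𝔄, 𝔅)` played with the
initial history `h` (the empty history corresponds to the plain game): the initial
position must be a partial isomorphism, and whichever tree of the forest `S` the
spoiler picks, she can survive the play down that tree.  (Since `S` is a finite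
forest, every play lasts at most `Nat.card S.V` rounds, so the fuel
`Nat.card S.V + 1` never runs out.) -/
def DupWinsFrom {L : FirstOrder.Language.{u, v}} {A B : Type*} (S : LForest) (sA : L.Structure A)
    (sB : L.Structure B) (h : List (A × B)) : Prop :=
  HistOK sA sB h ∧
  ∀ v : S.V, S.toQGraph.isRoot v → DWinN S.toQGraph sA sB (Nat.card S.V + 1) v h

/-- The duplicator has a winning strategy in the game `G_S(𝔄, 𝔅)`. -/
def DupWins {L : FirstOrder.Language.{u, v}} {A B : Type*} (S : LForest) (sA : L.Structure A)
    (sB : L.Structure B) : Prop :=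
  DupWinsFrom S sA sB []

end QSH
namespace QSH

open FirstOrder Language

/-! ### The forest `𝓕(P)` of a set of prefixes: the prefix tree (trie) of `P` -/

private lemma transGen_nat_lt {α : Type*} {r : α → α → Prop} (f : α → ℕ)
    (h : ∀ x y, r x y → f x < f y) {x y : α} (hxy : Relation.TransGen r x y) :
    f x < f y := by
  induction hxy with
  | single h' => exact h _ _ h'
  | tail _ h' ih => exact ih.trans (h _ _ h')

/-- The Γ-labelled graph `𝓕(P)` for a set of prefixes `P ⊆ Γ*`: its nodes are the
nonempty initial segments of words of `P`, a node `w` is labelled by its last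
letter, and there is an arc from `w` to `w ++ [s]`.  This is the forest obtained
by the recursive definition: `𝓕(∅)` is empty, and writing
`P = (∃ * P₁) ∪ (∀ * P₂)`, `𝓕(P)` is the disjoint union of a tree with an
`∃`-labelled root with an arc to each root of `𝓕(P₁)` and a tree with a
`∀`-labelled root with an arc to each root of `𝓕(P₂)` (omitting a tree when the
corresponding part of `P` is empty). -/
abbrev trieGraph (P : Set (List Quant)) : QGraph where
  V := {w : List Quant // w ≠ [] ∧ ∃ q ∈ P, w <+: q}
  arc x y := ∃ s : Quant, (y : List Quant) = (x : List Quant) ++ [s]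
  lab w := (w : List Quant).getLast w.2.1

/-- For finite `P`, the forest `𝓕(P)` as a finite Γ-labelled forest. -/
noncomputable def forestOf (P : Set (List Quant)) (hP : P.Finite) : LForest where
  toQGraph := trieGraph P
  finV := by
    have hfin : {w : List Quant | w ≠ [] ∧ ∃ q ∈ P, w <+: q}.Finite := by
      refine Set.Finite.subset (hP.biUnion fun q _ => q.inits.finite_toSet) ?_
      rintro w ⟨-, q, hq, hpre⟩
      exact Set.mem_biUnion hq ((List.mem_inits _ _).mpr hpre)
    exact hfin.to_subtype
  parent_unique := by
    rintro x y z ⟨s, hs⟩ ⟨s', hs'⟩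
    apply Subtype.ext
    have h2 : (x : List Quant) ++ [s] = (y : List Quant) ++ [s'] := by rw [← hs, ← hs']
    exact (List.append_inj' h2 rfl).1
  acyclic := by
    intro x hx
    have key : ∀ a b, (trieGraph P).arc a b →
        (a : List Quant).length < (b : List Quant).length := by
      rintro a b ⟨s, hs⟩
      simp [hs]
    exact absurd (transGen_nat_lt _ key hx) (lt_irrefl _)

/-- A prefix `p ∈ Γ*`, viewed as a Γ-labelled degenerate tree (a directed path
whose `i`-th node is labelled `p[i]`). -/
noncomputable def pathForest (p : List Quant) : LForest :=
  forestOf {p} (Set.finite_singleton p)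

/-- `f^p_m`: the set of prefixes of length at most `m` in which `p` does not embed
(i.e. of which `p` is not a subsequence). -/
def fpm (p : List Quant) (m : ℕ) : Set (List Quant) :=
  {q | ¬ p.Sublist q ∧ q.length ≤ m}

lemma fpm_finite (p : List Quant) (m : ℕ) : (fpm p m).Finite := by
  refine Set.Finite.subset (List.finite_length_le Quant m) ?_
  rintro q ⟨-, hq⟩
  exact hq

end QSH
namespace QSH

open FirstOrder Language

/-! ### The edge-coloured trees `Ã^p_m` and `B̃^p_m` -/

/-- A finite tree with `Bool`-coloured nodes (`true` = black) and
`Bool`-coloured edges to the children (`true` = red, `false` = blue). -/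
inductive CT : Type where
  | node : Bool → List (Bool × CT) → CT

/-- Is the root of this tree black? -/
def CT.isBlack : CT → Bool
  | .node b _ => b

/-- The children of the root, together with the colours of the edges to them. -/
def CT.children : CT → List (Bool × CT)
  | .node _ cs => cs

/-- The subtree at a given address (a list of child indices), if it exists. -/
def CT.sub : List ℕ → CT → Option CT
  | [], t => some t
  | i :: rest, t =>
    match t.children[i]? with
    | some p => CT.sub rest p.2
    | none => none

/-- The nodes of the tree `t`: the valid addresses. -/
abbrev CT.Node (t : CT) : Type := {addr : List ℕ // (CT.sub addr t).isSome = true}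

/-- The root of the tree. -/
def CT.rootNode (t : CT) : t.Node := ⟨[], rfl⟩

/-- There is an edge of colour `col` from the node at address `x` to the node at
address `y` (so `y` is a child of `x`). -/
def CT.edgeC (t : CT) (col : Bool) (x y : List ℕ) : Prop :=
  ∃ (i : ℕ) (s : CT) (p : Bool × CT),
    CT.sub x t = some s ∧ s.children[i]? = some p ∧ p.1 = col ∧ y = x ++ [i]

/-- The node at address `x` is black. -/
def CT.blackAt (t : CT) (x : List ℕ) : Prop :=
  ∃ s, CT.sub x t = some s ∧ s.isBlack = true

/-- The node at address `x` is a leaf. -/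
def CT.leafAt (t : CT) (x : List ℕ) : Prop :=
  ∃ s, CT.sub x t = some s ∧ s.children = []

/-- Exchange the colours of all edges (red ↔ blue): `Ã^{-p}_m` from `Ã^p_m`. -/
def CT.swap : CT → CT
  | .node b cs => .node b (cs.attach.map fun p => (!p.1.1, CT.swap p.1.2))
decreasing_by
  obtain ⟨⟨c, t⟩, hm⟩ := p
  have h := List.sizeOf_lt_of_mem hm
  simp only [Prod.mk.sizeOf_spec, CT.node.sizeOf_spec] at h ⊢
  omega

/-- Join two trees at their roots (the shared root, the "junction point"). -/
def CT.joinRoots : CT → CT → CT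
  | .node b cs, .node _ ds => .node b (cs ++ ds)

/-- A depth-1 tree whose edges are all red, with `kb` black leaves and
`kw` non-black leaves. -/
def starT (kb kw : ℕ) : CT :=
  .node false
    (List.replicate kb (true, CT.node true []) ++ List.replicate kw (true, CT.node false []))

/-- The pair `(Ã^p_m, B̃^p_m)` for the prefix `p = s :: q`, built by recursion:
* `Ã^∃_m` is a depth-1 all-red tree with `2m+1` leaves, exactly one black, and
  `B̃^∃_m` has `2m` leaves, none black;
* `Ã^∀_m` has `2m` leaves, all black, and `B̃^∀_m` has `2m+1` leaves, all black
  except one;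
* for `p = ∃q`, with `D^{X,Y}_{q,m}` the join at the roots of a copy of `X̃^q_m`
  and a copy of `Ỹ^{-q}_m`, `Ã^{∃q}_m` has a root joined by red edges to the
  junction points of one copy of `D^{A,A}`, `m` copies of `D^{A,B}` and `m`
  copies of `D^{B,A}`, while `B̃^{∃q}_m` omits the copy of `D^{A,A}`;
* `Ã^{∀q}_m` is defined as `B̃^{∃q}_m`, and `B̃^{∀q}_m` as `Ã^{∃q}_m` with
  `D^{A,A}` replaced by a copy of `D^{B,B}`. -/
def ABt : Quant → List Quant → ℕ → CT × CT
  | .ex, [], m => (starT 1 (2 * m), starT 0 (2 * m))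
  | .fa, [], m => (starT (2 * m) 0, starT (2 * m) 1)
  | .ex, s :: q, m =>
    let P := ABt s q m
    let DAA := P.1.joinRoots P.1.swap
    let DAB := P.1.joinRoots P.2.swap
    let DBA := P.2.joinRoots P.1.swap
    ( .node false ((true, DAA) ::
        (List.replicate m (true, DAB) ++ List.replicate m (true, DBA))),
      .node false (List.replicate m (true, DAB) ++ List.replicate m (true, DBA)) )
  | .fa, s :: q, m =>
    let P := ABt s q m
    let DAB := P.1.joinRoots P.2.swap
    let DBA := P.2.joinRoots P.1.swap
    let DBB := P.2.joinRoots P.2.swap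
    ( .node false (List.replicate m (true, DAB) ++ List.replicate m (true, DBA)),
      .node false ((true, DBB) ::
        (List.replicate m (true, DAB) ++ List.replicate m (true, DBA))) )

/-- The structure `Ã^p_m` (for nonempty `p`). -/
def Atil : List Quant → ℕ → CT
  | [], _ => CT.node false []
  | s :: q, m => (ABt s q m).1

/-- The structure `B̃^p_m` (for nonempty `p`). -/
def Btil : List Quant → ℕ → CT
  | [], _ => CT.node false []
  | s :: q, m => (ABt s q m).2

/-- The `τ⁺`-interpretation of the constant `r` on the nodes of `t`: the root. -/
def ctFunMap (t : CT) : ∀ {n : ℕ}, TauPlusFun n → (Fin n → t.Node) → t.Node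
  | _, .r, _ => t.rootNode

/-- The `τ⁺`-interpretation of `U`, `R`, `B` on the nodes of `t`: `U` holds of
the black nodes, `R` of the red edges and `B` of the blue edges. -/
def ctRelMap (t : CT) : ∀ {n : ℕ}, TauPlusRel n → (Fin n → t.Node) → Prop
  | _, .U, vv => t.blackAt (vv 0).1
  | _, .R, vv => t.edgeC true (vv 0).1 (vv 1).1
  | _, .B, vv => t.edgeC false (vv 0).1 (vv 1).1

/-- The coloured tree `t` as a `τ⁺`-structure. -/
def CT.Str (t : CT) : tauPlus.Structure t.Node where
  funMap := fun f => ctFunMap t f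
  RelMap := fun Rl => ctRelMap t Rl

/-- Satisfaction of a `τ⁺`-sentence in the coloured tree `t`. -/
def CTSat (t : CT) (φ : NNF tauPlus 0) : Prop :=
  φ.Realize t.Str fun i => i.elim0

end QSH
namespace QSH

open FirstOrder Language

/-! ### The `τ⁺`-formulas `ψ̃_p`, `ψ̃_{-p}` and the sentences `φ̃_p`, `φ̃_{-p}` -/

/-- The pair `(ψ̃_p(y), ψ̃_{-p}(y))` of `τ⁺`-formulas with one free variable `y`:
`ψ̃_ε(x) = ψ̃_{-ε}(x) := U(x)`;
`ψ̃_{∃q}(y) := ∃x (R y x ∧ ψ̃_q(x) ∧ ψ̃_{-q}(x))`;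
`ψ̃_{∀q}(y) := ∀x (R y x → ψ̃_q(x) ∨ ψ̃_{-q}(x))`;
and dually with `B` in place of `R` for `ψ̃_{-∃q}`, `ψ̃_{-∀q}`
(written in negation normal form). -/
def psiPair : List Quant → NNF tauPlus 1 × NNF tauPlus 1
  | [] => (.rel TauPlusRel.U ![Term.var 0], .rel TauPlusRel.U ![Term.var 0])
  | .ex :: q =>
    let P := psiPair q
    let f := P.1.relabel fun _ => (1 : Fin 2)
    let g := P.2.relabel fun _ => (1 : Fin 2)
    ( .ex (.conj (.rel TauPlusRel.R ![Term.var 0, Term.var 1]) (.conj f g)),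
      .ex (.conj (.rel TauPlusRel.B ![Term.var 0, Term.var 1]) (.conj f g)) )
  | .fa :: q =>
    let P := psiPair q
    let f := P.1.relabel fun _ => (1 : Fin 2)
    let g := P.2.relabel fun _ => (1 : Fin 2)
    ( .fa (.disj (.nrel TauPlusRel.R ![Term.var 0, Term.var 1]) (.disj f g)),
      .fa (.disj (.nrel TauPlusRel.B ![Term.var 0, Term.var 1]) (.disj f g)) )

/-- The constant symbol `r` as a closed `τ⁺`-term. -/
def rTerm : tauPlus.Term (Fin 0) := Term.func TauPlusFun.r ![]

/-- The sentence `φ̃_p := ψ̃_p(r)`. -/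
def phiTil (p : List Quant) : NNF tauPlus 0 := (psiPair p).1.subst fun _ => rTerm

/-- The sentence `φ̃_{-p} := ψ̃_{-p}(r)`. -/
def phiTilNeg (p : List Quant) : NNF tauPlus 0 := (psiPair p).2.subst fun _ => rTerm

end QSH
namespace QSH

open FirstOrder Language

/-! ### The reduction from `τ⁺` to `τ = ⟨E⟩` -/

/-- The atom `E xᵢ xⱼ` over `τ`. -/
def Eat {n : ℕ} (i j : Fin n) : NNF tau n := .rel TauRel.E ![Term.var i, Term.var j]

/-- The negated atom `¬ E xᵢ xⱼ` over `τ`. -/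
def nEat {n : ℕ} (i j : Fin n) : NNF tau n := .nrel TauRel.E ![Term.var i, Term.var j]

/-- The pair `(ψ'_q(x, y), ψ'_{-q}(x, y))` of `τ`-formulas with two free
variables (variable `0` is `x`, variable `1` is `y`):
`ψ'_ε(x,y) = ψ'_{-ε}(x,y) := Exy ∧ Eyx`;
`ψ'_{∃q}(x,y) := ∃z (Eyz ∧ z ≠ x ∧ ψ'_q(y,z) ∧ ψ'_{-q}(y,z))`;
`ψ'_{∀q}(x,y) := ∀z (Eyz ∧ z ≠ x → ψ'_q(y,z) ∨ ψ'_{-q}(y,z))`;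
and dually with `Ezy` in place of `Eyz` for `ψ'_{-∃q}`, `ψ'_{-∀q}`
(written in negation normal form). -/
def psiRed : List Quant → NNF tau 2 × NNF tau 2
  | [] => (.conj (Eat 0 1) (Eat 1 0), .conj (Eat 0 1) (Eat 1 0))
  | .ex :: q =>
    let P := psiRed q
    let f := P.1.relabel ![1, 2]
    let g := P.2.relabel ![1, 2]
    ( .ex (.conj (Eat 1 2) (.conj (.ne (Term.var 2) (Term.var 0)) (.conj f g))),
      .ex (.conj (Eat 2 1) (.conj (.ne (Term.var 2) (Term.var 0)) (.conj f g))) )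
  | .fa :: q =>
    let P := psiRed q
    let f := P.1.relabel ![1, 2]
    let g := P.2.relabel ![1, 2]
    ( .fa (.disj (nEat 1 2) (.disj (.eq (Term.var 2) (Term.var 0)) (.disj f g))),
      .fa (.disj (nEat 2 1) (.disj (.eq (Term.var 2) (Term.var 0)) (.disj f g))) )

/-- The pair `(ψ'_q(r, y), ψ'_{-q}(r, y))` after the transformation removing the
root: atoms `z ≠ r` are removed and atoms involving the root are replaced by
self-loops.  Variable `0` is `y`. -/
def chiRed : List Quant → NNF tau 1 × NNF tau 1
  | [] => (.conj (Eat 0 0) (Eat 0 0), .conj (Eat 0 0) (Eat 0 0))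
  | .ex :: q =>
    let P := psiRed q
    ( .ex (.conj (Eat 0 1) (.conj P.1 P.2)),
      .ex (.conj (Eat 1 0) (.conj P.1 P.2)) )
  | .fa :: q =>
    let P := psiRed q
    ( .fa (.disj (nEat 0 1) (.disj P.1 P.2)),
      .fa (.disj (nEat 1 0) (.disj P.1 P.2)) )

/-- `φ_{∃∃}`. -/
def phiEE : NNF tau 0 :=
  .ex (.conj (Eat 0 0)
    (.conj (.ex (.conj (Eat 0 1) (.conj (Eat 1 0) (Eat 1 1))))
           (.ex (.conj (Eat 1 0) (.conj (Eat 0 1) (nEat 1 1))))))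

/-- `φ_{∃∀}`. -/
def phiEA : NNF tau 0 :=
  .ex (.conj (Eat 0 0)
    (.conj (.fa (.disj (nEat 0 1) (.conj (Eat 1 0) (Eat 1 1))))
           (.fa (.disj (nEat 1 0) (.conj (Eat 0 1) (nEat 1 1))))))

/-- `φ_{∀∃}`. -/
def phiAE : NNF tau 0 :=
  .fa (.disj (nEat 0 0)
    (.disj (.ex (.conj (Eat 0 1) (.conj (Eat 1 0) (Eat 1 1))))
           (.ex (.conj (Eat 1 0) (.conj (Eat 0 1) (nEat 1 1))))))

/-- `φ_{∀∀}`. -/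
def phiAA : NNF tau 0 :=
  .fa (.disj (nEat 0 0)
    (.disj (.fa (.disj (nEat 0 1) (.conj (Eat 1 0) (Eat 1 1))))
           (.fa (.disj (nEat 1 0) (.conj (Eat 0 1) (nEat 1 1))))))

/-- The `τ`-sentence `φ_p`, obtained from `ψ'_p(r, r)` by replacing the atoms
involving the root by self-loops and removing the atoms `x ≠ r`; the ad hoc
sentences of the paper are used when `|p| = 2`. -/
def phiRed : List Quant → NNF tau 0
  | [] => .verum
  | [Quant.ex, Quant.ex] => phiEE
  | [Quant.ex, Quant.fa] => phiEA
  | [Quant.fa, Quant.ex] => phiAE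
  | [Quant.fa, Quant.fa] => phiAA
  | .ex :: q => .ex (.conj (Eat 0 0) (.conj (chiRed q).1 (chiRed q).2))
  | .fa :: q => .fa (.disj (nEat 0 0) (.disj (chiRed q).1 (chiRed q).2))

/-- The arc relation of the digraph obtained from the coloured tree `t` by the
reduction from `τ⁺` to `τ`:  red edges become forward arcs, blue edges become
backward arcs; arcs are added in both directions between every black leaf and
the junction point of its connected component (its ancestor just below the
root); each edge from the (deleted) root to a junction point becomes a
self-loop at the junction point; and, when the condition `two` holds (i.e. when
`|p| = 2`), every leaf which is an endpoint of a red edge gets a self-loop. -/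
def reducedE (t : CT) (two : Prop) (x y : List ℕ) : Prop :=
  t.edgeC true x y ∨ t.edgeC false y x ∨
  ((t.edgeC true [] x ∨ t.edgeC false [] x) ∧ x = y) ∨
  (t.blackAt x ∧ y = x.take 1) ∨ (t.blackAt y ∧ x = y.take 1) ∨
  (two ∧ x = y ∧ t.leafAt x ∧ ∃ z : List ℕ, t.edgeC true z x ∨ t.edgeC true x z)

/-- The non-root nodes of `t` (the universe after deleting the root). -/
abbrev CT.NRNode (t : CT) : Type := {x : t.Node // x.1 ≠ []}

/-- Interpretation of `E`. -/
def redRelMap (t : CT) (two : Prop) : ∀ {n : ℕ}, TauRel n → (Fin n → t.NRNode) → Prop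
  | _, .E, vv => reducedE t two (vv 0).1.1 (vv 1).1.1

/-- The digraph (`τ`-structure) obtained from `t` by the reduction from `τ⁺`
to `τ`. -/
def reducedStr (t : CT) (two : Prop) : tau.Structure t.NRNode where
  funMap := fun f => Empty.elim f
  RelMap := fun Rl => redRelMap t two Rl

/-- Satisfaction of a `τ`-sentence in the reduced digraph of `t`. -/
def redSat (t : CT) (two : Prop) (φ : NNF tau 0) : Prop :=
  φ.Realize (reducedStr t two) fun i => i.elim0

end QSH
namespace QSH

/-! ### Rosen's map `f : Γ* → Γ_c*` -/

/-- The alphabet `Γ_c = {∃, ∀, ∃*, ∀*}`. -/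
inductive QuantC : Type where
  | ex : QuantC
  | fa : QuantC
  | exStar : QuantC
  | faStar : QuantC
deriving DecidableEq

/-- The dual of a letter of Γ (swap `∃` and `∀`). -/
def Quant.dual : Quant → Quant
  | .ex => .fa
  | .fa => .ex

/-- The dual of a letter of `Γ_c` (swap `∃` with `∀` and `∃*` with `∀*`). -/
def QuantC.dual : QuantC → QuantC
  | .ex => .fa
  | .fa => .ex
  | .exStar => .faStar
  | .faStar => .exStar

/-- `f` on a single maximal block: `f(∃ⁿ) = a₁ * ⋯ * a_{2n-1}` with `aᵢ = ∀*`
for odd `i` and `aᵢ = ∃` for even `i`, and dually for `f(∀ⁿ)`. -/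
def fBlock : Quant → ℕ → List QuantC
  | .ex, n => QuantC.faStar :: (List.replicate (n - 1) [QuantC.ex, QuantC.faStar]).flatten
  | .fa, n => QuantC.exStar :: (List.replicate (n - 1) [QuantC.fa, QuantC.exStar]).flatten

/-- Rosen's map `f : Γ* → Γ_c*`: decompose `p` into maximal constant blocks
`p = s₁^{i₁} * ⋯ * s_n^{i_n}` and concatenate the images of the blocks. -/
def fMap (p : List Quant) : List QuantC :=
  ((p.splitBy fun a b => a == b).map fun blk => fBlock blk.headI blk.length).flatten

end QSH
namespace QSH

open FirstOrder Language

/-! ### Joins of structures at a point, and automorphisms -/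

/-- `e` is an automorphism of the (relational) structure `sA`. -/
def IsAuto {L : FirstOrder.Language} {A : Type*} (sA : L.Structure A) (e : A ≃ A) : Prop :=
  ∀ (n : ℕ) (R : L.Relations n) (vv : Fin n → A), sA.RelMap R vv ↔ sA.RelMap R (e ∘ vv)

/-- The join `𝔄 ⊕ 𝔅` of two structures on subsets `A`, `B` of an ambient type:
the structure on `A ∪ B` in which each relation is interpreted as the union of
its interpretations in `𝔄` and `𝔅` (the signature is assumed relational). -/
def joinStructure {L : FirstOrder.Language} (hrel : ∀ n : ℕ, IsEmpty (L.Functions n))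
    {Ω : Type} (A B : Set Ω) (sA : L.Structure ↥A) (sB : L.Structure ↥B) :
    L.Structure ↥(A ∪ B) where
  funMap := fun {n} f _ => ((hrel n).false f).elim
  RelMap := fun {n} R vv =>
    (∃ u : Fin n → ↥A, (∀ i, (u i : Ω) = (vv i : Ω)) ∧ sA.RelMap R u) ∨
    (∃ u : Fin n → ↥B, (∀ i, (u i : Ω) = (vv i : Ω)) ∧ sB.RelMap R u)

end QSH

namespace QSH

open FirstOrder Language

/-! ### Auxiliary development -/


private lemma mem_of_getElem?' {α : Type*} {l : List α} {i : ℕ} {a : α}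
    (h : l[i]? = some a) : a ∈ l := by
  rw [List.getElem?_eq_some_iff] at h
  obtain ⟨hi, rfl⟩ := h
  exact List.getElem_mem hi

private lemma getElem?_of_mem' {α : Type*} {l : List α} {a : α} (h : a ∈ l) :
    ∃ i : ℕ, l[i]? = some a := by
  obtain ⟨i, hi, rfl⟩ := List.getElem_of_mem h
  exact ⟨i, by simp [List.getElem?_eq_some_iff, hi]⟩

/-- Direct recursive semantics of `ψ̃_p` (col = true) / `ψ̃_{-p}` (col = false)
at the root of a coloured tree. -/
def Sem : Bool → List Quant → CT → Prop
  | _, [], s => s.isBlack = true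
  | col, .ex :: q, s => ∃ c ∈ s.children, c.1 = col ∧ Sem true q c.2 ∧ Sem false q c.2
  | col, .fa :: q, s => ∀ c ∈ s.children, c.1 = col → Sem true q c.2 ∨ Sem false q c.2

lemma CT.children_swap (t : CT) :
    t.swap.children = t.children.map fun p => (!p.1, p.2.swap) := by
  cases t with
  | node b cs =>
    rw [CT.swap]
    show (cs.attach.map fun p => (!p.1.1, CT.swap p.1.2)) = _
    exact List.attach_map_val (l := cs) (f := fun p => (!p.1, p.2.swap))

lemma CT.isBlack_swap (t : CT) : t.swap.isBlack = t.isBlack := by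
  cases t with
  | node b cs =>
    rw [CT.swap]
    rfl

lemma Sem_swap : ∀ (p : List Quant) (col : Bool) (t : CT),
    Sem col p t.swap ↔ Sem (!col) p t
  | [], col, t => by simp [Sem, CT.isBlack_swap]
  | .ex :: q, col, t => by
    simp only [Sem, CT.children_swap, List.mem_map]
    constructor
    · rintro ⟨c, ⟨d, hd, rfl⟩, hcol, h1, h2⟩
      refine ⟨d, hd, ?_, ?_, ?_⟩
      · cases hcol; simp
      · exact (Sem_swap q false d.2).mp h2
      · exact (Sem_swap q true d.2).mp h1
    · rintro ⟨d, hd, hcol, h1, h2⟩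
      refine ⟨(!d.1, d.2.swap), ⟨d, hd, rfl⟩, by simp [hcol], ?_, ?_⟩
      · exact (Sem_swap q true d.2).mpr (by simpa using h2)
      · exact (Sem_swap q false d.2).mpr (by simpa using h1)
  | .fa :: q, col, t => by
    simp only [Sem, CT.children_swap, List.mem_map]
    constructor
    · rintro h d hd hcol
      rcases h (!d.1, d.2.swap) ⟨d, hd, rfl⟩ (by simp [hcol]) with h1 | h2
      · exact Or.inr ((Sem_swap q true d.2).mp h1)
      · exact Or.inl (by simpa using (Sem_swap q false d.2).mp h2)
    · rintro h c ⟨d, hd, rfl⟩ hcol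
      have hd' : d.1 = !col := by cases hcol; simp
      rcases h d hd hd' with h1 | h2
      · exact Or.inr ((Sem_swap q false d.2).mpr (by simpa using h1))
      · exact Or.inl ((Sem_swap q true d.2).mpr (by simpa using h2))

lemma CT.children_joinRoots (X Y : CT) :
    (X.joinRoots Y).children = X.children ++ Y.children := by
  cases X; cases Y; rfl

lemma sem_join_left (q : List Quant) (hq : q ≠ []) (X Y : CT)
    (hY : ∀ c ∈ Y.children, c.1 = false) :
    Sem true q (X.joinRoots Y) ↔ Sem true q X := by
  match q with
  | [] => exact absurd rfl hq
  | .ex :: q =>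
    simp only [Sem, CT.children_joinRoots, List.mem_append]
    constructor
    · rintro ⟨c, hc | hc, hcol, h⟩
      · exact ⟨c, hc, hcol, h⟩
      · exact absurd hcol (by simp [hY c hc])
    · rintro ⟨c, hc, h⟩; exact ⟨c, Or.inl hc, h⟩
  | .fa :: q =>
    simp only [Sem, CT.children_joinRoots, List.mem_append]
    constructor
    · intro h c hc hcol; exact h c (Or.inl hc) hcol
    · rintro h c (hc | hc) hcol
      · exact h c hc hcol
      · exact absurd hcol (by simp [hY c hc])

lemma sem_join_right (q : List Quant) (hq : q ≠ []) (X Y : CT)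
    (hX : ∀ c ∈ X.children, c.1 = true) :
    Sem false q (X.joinRoots Y) ↔ Sem false q Y := by
  match q with
  | [] => exact absurd rfl hq
  | .ex :: q =>
    simp only [Sem, CT.children_joinRoots, List.mem_append]
    constructor
    · rintro ⟨c, hc | hc, hcol, h⟩
      · exact absurd hcol (by simp [hX c hc])
      · exact ⟨c, hc, hcol, h⟩
    · rintro ⟨c, hc, h⟩; exact ⟨c, Or.inr hc, h⟩
  | .fa :: q =>
    simp only [Sem, CT.children_joinRoots, List.mem_append]
    constructor
    · intro h c hc hcol; exact h c (Or.inr hc) hcol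
    · rintro h c (hc | hc) hcol
      · exact absurd hcol (by simp [hX c hc])
      · exact h c hc hcol

lemma ABt_children_true (s : Quant) (q : List Quant) (m : ℕ) :
    (∀ c ∈ (ABt s q m).1.children, c.1 = true) ∧
    (∀ c ∈ (ABt s q m).2.children, c.1 = true) := by
  match s, q with
  | .ex, [] =>
    constructor <;>
      · intro c hc
        simp only [ABt, starT, CT.children, List.mem_append, List.mem_replicate] at hc
        rcases hc with ⟨-, rfl⟩ | ⟨-, rfl⟩ <;> rfl
  | .fa, [] =>
    constructor <;>
      · intro c hc
        simp only [ABt, starT, CT.children, List.mem_append, List.mem_replicate] at hc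
        rcases hc with ⟨-, rfl⟩ | ⟨-, rfl⟩ <;> rfl
  | .ex, s' :: q' =>
    constructor <;>
      · intro c hc
        simp only [ABt, CT.children, List.mem_cons, List.mem_append,
          List.mem_replicate] at hc
        first
        | (rcases hc with rfl | ⟨-, rfl⟩ | ⟨-, rfl⟩ <;> rfl)
        | (rcases hc with ⟨-, rfl⟩ | ⟨-, rfl⟩ <;> rfl)
  | .fa, s' :: q' =>
    constructor <;>
      · intro c hc
        simp only [ABt, CT.children, List.mem_cons, List.mem_append,
          List.mem_replicate] at hc
        first
        | (rcases hc with rfl | ⟨-, rfl⟩ | ⟨-, rfl⟩ <;> rfl)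
        | (rcases hc with ⟨-, rfl⟩ | ⟨-, rfl⟩ <;> rfl)

lemma swap_children_false {t : CT} (ht : ∀ c ∈ t.children, c.1 = true) :
    ∀ c ∈ t.swap.children, c.1 = false := by
  intro c hc
  rw [CT.children_swap] at hc
  rcases List.mem_map.mp hc with ⟨d, hd, rfl⟩
  simp [ht d hd]

/-- The central combinatorial lemma: `Ã^{s::q}_m ⊨ ψ̃` and `B̃^{s::q}_m ⊭ ψ̃`. -/
lemma ABt_spec (q : List Quant) : ∀ (s : Quant) (m : ℕ),
    Sem true (s :: q) (ABt s q m).1 ∧ ¬ Sem true (s :: q) (ABt s q m).2 := by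
  induction q with
  | nil =>
    rintro (_ | _) m
    · constructor
      · refine ⟨(true, CT.node true []), ?_, rfl, rfl, rfl⟩
        simp [ABt, starT, CT.children]
      · rintro ⟨c, hc, hcol, h1, h2⟩
        simp only [ABt, starT, CT.children, List.replicate_zero, List.nil_append,
          List.mem_replicate] at hc
        rw [hc.2] at h1
        exact absurd h1 (by simp [Sem, CT.isBlack])
    · constructor
      · intro c hc hcol
        simp only [ABt, starT, CT.children, List.replicate_zero, List.append_nil,
          List.mem_replicate] at hc
        rw [hc.2]
        exact Or.inl rfl
      · intro h
        have := h (true, CT.node false [])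
          (by simp [ABt, starT, CT.children]) rfl
        rcases this with h1 | h1 <;> exact absurd h1 (by simp [Sem, CT.isBlack])
  | cons s' q' ih =>
    intro s m
    obtain ⟨hA, hB⟩ := ih s' m
    set P := ABt s' q' m with hP
    have hc1 : ∀ c ∈ P.1.children, c.1 = true := (ABt_children_true s' q' m).1
    have hc2 : ∀ c ∈ P.2.children, c.1 = true := (ABt_children_true s' q' m).2
    have hq : s' :: q' ≠ [] := by simp
    have key : ∀ X Y : CT, (∀ c ∈ X.children, c.1 = true) →
        (∀ c ∈ Y.children, c.1 = true) →
        (Sem true (s' :: q') (X.joinRoots Y.swap) ↔ Sem true (s' :: q') X) ∧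
        (Sem false (s' :: q') (X.joinRoots Y.swap) ↔ Sem true (s' :: q') Y) := by
      intro X Y hX hY
      constructor
      · exact sem_join_left _ hq X Y.swap (swap_children_false hY)
      · rw [sem_join_right _ hq X Y.swap hX, Sem_swap, Bool.not_false]
    have kAA := key P.1 P.1 hc1 hc1
    have kAB := key P.1 P.2 hc1 hc2
    have kBA := key P.2 P.1 hc2 hc1
    have kBB := key P.2 P.2 hc2 hc2
    cases s with
    | ex =>
      constructor
      · refine ⟨(true, P.1.joinRoots P.1.swap), ?_, rfl, kAA.1.mpr hA, kAA.2.mpr hA⟩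
        simp [ABt, CT.children, ← hP]
      · rintro ⟨c, hc, hcol, h1, h2⟩
        simp only [ABt, CT.children, List.mem_append, List.mem_replicate, ← hP] at hc
        rcases hc with ⟨-, rfl⟩ | ⟨-, rfl⟩
        · exact hB (kAB.2.mp h2)
        · exact hB (kBA.1.mp h1)
    | fa =>
      constructor
      · intro c hc hcol
        simp only [ABt, CT.children, List.mem_append, List.mem_replicate, ← hP] at hc
        rcases hc with ⟨-, rfl⟩ | ⟨-, rfl⟩
        · exact Or.inl (kAB.1.mpr hA)
        · exact Or.inr (kBA.2.mpr hA)
      · intro h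
        have := h (true, P.2.joinRoots P.2.swap)
          (by simp [ABt, CT.children, ← hP]) rfl
        rcases this with h1 | h1
        · exact hB (kBB.1.mp h1)
        · exact hB (kBB.2.mp h1)

/-! ### Bridging `NNF.Realize` and `Sem` -/

lemma termRealize_relabel {L : FirstOrder.Language} {M : Type*} (str : L.Structure M)
    {n k : ℕ} (f : Fin n → Fin k) (vv : Fin k → M) (t : L.Term (Fin n)) :
    TermRealize str vv (t.relabel f) = TermRealize str (vv ∘ f) t := by
  induction t with
  | var a => rfl
  | func F ts ih => simp only [Term.relabel, TermRealize, ih]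

private lemma snoc_comp {M : Type*} {n k : ℕ} (f : Fin n → Fin k) (vv : Fin k → M) (x : M) :
    (Fin.snoc vv x ∘ Fin.snoc (fun i => (f i).castSucc) (Fin.last k) : Fin (n + 1) → M)
      = Fin.snoc (vv ∘ f) x := by
  funext i
  induction i using Fin.lastCases with
  | last => simp
  | cast j => simp

lemma realize_relabel {L : FirstOrder.Language} {M : Type*} (str : L.Structure M) :
    ∀ {n k : ℕ} (φ : NNF L n) (f : Fin n → Fin k) (vv : Fin k → M),
    (φ.relabel f).Realize str vv ↔ φ.Realize str (vv ∘ f)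
  | _, _, .verum, f, vv => Iff.rfl
  | _, _, .falsum, f, vv => Iff.rfl
  | _, _, .eq t₁ t₂, f, vv => by
    simp only [NNF.relabel, NNF.Realize, termRealize_relabel]
  | _, _, .ne t₁ t₂, f, vv => by
    simp only [NNF.relabel, NNF.Realize, termRealize_relabel]
  | _, _, .rel R ts, f, vv => by
    simp only [NNF.relabel, NNF.Realize, termRealize_relabel]
  | _, _, .nrel R ts, f, vv => by
    simp only [NNF.relabel, NNF.Realize, termRealize_relabel]
  | _, _, .conj φ ψ, f, vv => by
    simp only [NNF.relabel, NNF.Realize, realize_relabel str φ, realize_relabel str ψ]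
  | _, _, .disj φ ψ, f, vv => by
    simp only [NNF.relabel, NNF.Realize, realize_relabel str φ, realize_relabel str ψ]
  | _, _, .ex φ, f, vv => by
    simp only [NNF.relabel, NNF.Realize]
    refine exists_congr fun x => ?_
    rw [realize_relabel str φ, snoc_comp]
  | _, _, .fa φ, f, vv => by
    simp only [NNF.relabel, NNF.Realize]
    refine forall_congr' fun x => ?_
    rw [realize_relabel str φ, snoc_comp]

lemma termRealize_subst {L : FirstOrder.Language} {M : Type*} (str : L.Structure M)
    {n k : ℕ} (f : Fin n → L.Term (Fin k)) (vv : Fin k → M) (t : L.Term (Fin n)) :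
    TermRealize str vv (t.subst f) = TermRealize str (fun i => TermRealize str vv (f i)) t := by
  induction t with
  | var a => rfl
  | func F ts ih => simp only [Term.subst, TermRealize, ih]

private lemma snoc_comp_subst {L : FirstOrder.Language} {M : Type*} (str : L.Structure M)
    {n k : ℕ} (f : Fin n → L.Term (Fin k)) (vv : Fin k → M) (x : M) :
    (fun i => TermRealize str (Fin.snoc vv x)
        ((Fin.snoc (fun i => (f i).relabel Fin.castSucc) (Term.var (Fin.last k))
          : Fin (n + 1) → L.Term (Fin (k + 1))) i))
      = Fin.snoc (fun i => TermRealize str vv (f i)) x := by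
  funext i
  induction i using Fin.lastCases with
  | last => simp [TermRealize]
  | cast j =>
    simp only [Fin.snoc_castSucc, termRealize_relabel]
    congr 1
    funext a
    simp

lemma realize_subst {L : FirstOrder.Language} {M : Type*} (str : L.Structure M) :
    ∀ {n k : ℕ} (φ : NNF L n) (f : Fin n → L.Term (Fin k)) (vv : Fin k → M),
    (φ.subst f).Realize str vv ↔ φ.Realize str fun i => TermRealize str vv (f i)
  | _, _, .verum, f, vv => Iff.rfl
  | _, _, .falsum, f, vv => Iff.rfl
  | _, _, .eq t₁ t₂, f, vv => by
    simp only [NNF.subst, NNF.Realize, termRealize_subst]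
  | _, _, .ne t₁ t₂, f, vv => by
    simp only [NNF.subst, NNF.Realize, termRealize_subst]
  | _, _, .rel R ts, f, vv => by
    simp only [NNF.subst, NNF.Realize, termRealize_subst]
  | _, _, .nrel R ts, f, vv => by
    simp only [NNF.subst, NNF.Realize, termRealize_subst]
  | _, _, .conj φ ψ, f, vv => by
    simp only [NNF.subst, NNF.Realize, realize_subst str φ, realize_subst str ψ]
  | _, _, .disj φ ψ, f, vv => by
    simp only [NNF.subst, NNF.Realize, realize_subst str φ, realize_subst str ψ]
  | _, _, .ex φ, f, vv => by
    simp only [NNF.subst, NNF.Realize]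
    refine exists_congr fun x => ?_
    rw [realize_subst str φ, snoc_comp_subst]
  | _, _, .fa φ, f, vv => by
    simp only [NNF.subst, NNF.Realize]
    refine forall_congr' fun x => ?_
    rw [realize_subst str φ, snoc_comp_subst]

lemma sub_append (x : List ℕ) : ∀ (t : CT) (y : List ℕ),
    CT.sub (x ++ y) t = (CT.sub x t).bind (CT.sub y) := by
  induction x with
  | nil => intro t y; rfl
  | cons i rest ih =>
    intro t y
    show (match t.children[i]? with
      | some p => CT.sub (rest ++ y) p.2
      | none => none) = _
    cases h : t.children[i]? with
    | none => simp [CT.sub, h]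
    | some p => simp [CT.sub, h, ih]

lemma sub_child {t : CT} {v : List ℕ} {s : CT} (hs : CT.sub v t = some s)
    {i : ℕ} {p : Bool × CT} (hp : s.children[i]? = some p) :
    CT.sub (v ++ [i]) t = some p.2 := by
  rw [sub_append, hs]
  simp [CT.sub, hp]

lemma edge_iff {t : CT} {v : List ℕ} {s : CT} (hs : CT.sub v t = some s)
    (col : Bool) (w : List ℕ) :
    t.edgeC col v w ↔ ∃ (i : ℕ) (p : Bool × CT),
      s.children[i]? = some p ∧ p.1 = col ∧ w = v ++ [i] := by
  constructor
  · rintro ⟨i, s', p, hs', hp, hc, rfl⟩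
    rw [hs] at hs'
    exact ⟨i, p, by rw [Option.some_inj.mp hs']; exact hp, hc, rfl⟩
  · rintro ⟨i, p, hp, hc, rfl⟩
    exact ⟨i, s, p, hs, hp, hc, rfl⟩

lemma black_iff {t : CT} {v : List ℕ} {s : CT} (hs : CT.sub v t = some s) :
    t.blackAt v ↔ s.isBlack = true := by
  constructor
  · rintro ⟨s', hs', hb⟩
    rw [hs] at hs'
    rw [Option.some_inj.mp hs']
    exact hb
  · intro hb; exact ⟨s, hs, hb⟩

/-- The key bridge: realization of `ψ̃_p` / `ψ̃_{-p}` at a node is the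
recursive semantics on the subtree at that node. -/
lemma realize_psi : ∀ (p : List Quant) (t : CT) (v : t.Node) (s : CT),
    CT.sub v.1 t = some s →
    (((psiPair p).1.Realize t.Str (fun _ => v) ↔ Sem true p s) ∧
     ((psiPair p).2.Realize t.Str (fun _ => v) ↔ Sem false p s)) := by
  intro p
  induction p with
  | nil =>
    intro t v s hs
    constructor <;>
    · show t.Str.RelMap TauPlusRel.U _ ↔ _
      show t.blackAt _ ↔ _
      have : (TermRealize t.Str (fun _ => v) (![Term.var 0] 0)) = v := rfl
      rw [show (fun i => TermRealize t.Str (fun _ : Fin 1 => v) (![Term.var 0] i)) 0 = v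
        from rfl]
      exact black_iff hs
  | cons sq q ih =>
    intro t v s hs
    have hedge : ∀ (col : Bool) (x : t.Node),
        (t.Str.RelMap (if col then TauPlusRel.R else TauPlusRel.B)
          fun i => TermRealize t.Str (Fin.snoc (fun _ : Fin 1 => v) x)
            (![Term.var 0, Term.var 1] i)) ↔ t.edgeC col v.1 x.1 := by
      intro col x
      have h0 : TermRealize t.Str (Fin.snoc (fun _ : Fin 1 => v) x)
          (![Term.var 0, Term.var 1] 0) = v := by
        rw [Matrix.cons_val_zero]
        simp only [TermRealize]
        simp [Fin.snoc]
      have h1 : TermRealize t.Str (Fin.snoc (fun _ : Fin 1 => v) x)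
          (![Term.var 0, Term.var 1] 1) = x := by
        rw [Matrix.cons_val_one, Matrix.cons_val_zero]
        simp only [TermRealize]
        simp [Fin.snoc]
      cases col <;>
      · show t.edgeC _ _ _ ↔ _
        rw [show (fun i => TermRealize t.Str (Fin.snoc (fun _ : Fin 1 => v) x)
          (![Term.var 0, Term.var 1] i)) 0 = v from h0,
          show (fun i => TermRealize t.Str (Fin.snoc (fun _ : Fin 1 => v) x)
          (![Term.var 0, Term.var 1] i)) 1 = x from h1]
    have hsub : ∀ (x : t.Node),
        ((psiPair q).1.relabel (fun _ : Fin 1 => (1 : Fin 2))).Realize t.Str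
            (Fin.snoc (fun _ : Fin 1 => v) x) ↔
          (psiPair q).1.Realize t.Str (fun _ => x) := by
      intro x
      rw [realize_relabel]
      rfl
    have hsub2 : ∀ (x : t.Node),
        ((psiPair q).2.relabel (fun _ : Fin 1 => (1 : Fin 2))).Realize t.Str
            (Fin.snoc (fun _ : Fin 1 => v) x) ↔
          (psiPair q).2.Realize t.Str (fun _ => x) := by
      intro x
      rw [realize_relabel]
      rfl
    cases sq with
    | ex =>
      constructor
      · show (∃ x : t.Node, _ ∧ _ ∧ _) ↔ _
        constructor
        · rintro ⟨x, he, h1, h2⟩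
          have he' := (hedge true x).mp he
          rcases (edge_iff hs true x.1).mp he' with ⟨i, pc, hpc, hcol, hx⟩
          have hx2 : CT.sub x.1 t = some pc.2 := by rw [hx]; exact sub_child hs hpc
          refine ⟨pc, mem_of_getElem?' hpc, hcol, ?_, ?_⟩
          · exact (ih t x pc.2 hx2).1.mp ((hsub x).mp h1)
          · exact (ih t x pc.2 hx2).2.mp ((hsub2 x).mp h2)
        · rintro ⟨c, hc, hcol, h1, h2⟩
          rcases getElem?_of_mem' hc with ⟨i, hi⟩
          have hx2 : CT.sub (v.1 ++ [i]) t = some c.2 := sub_child hs hi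
          refine ⟨⟨v.1 ++ [i], by rw [hx2]; rfl⟩, ?_, ?_, ?_⟩
          · exact (hedge true _).mpr ((edge_iff hs true _).mpr ⟨i, c, hi, hcol, rfl⟩)
          · exact (hsub _).mpr ((ih t _ c.2 hx2).1.mpr h1)
          · exact (hsub2 _).mpr ((ih t _ c.2 hx2).2.mpr h2)
      · show (∃ x : t.Node, _ ∧ _ ∧ _) ↔ _
        constructor
        · rintro ⟨x, he, h1, h2⟩
          have he' := (hedge false x).mp he
          rcases (edge_iff hs false x.1).mp he' with ⟨i, pc, hpc, hcol, hx⟩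
          have hx2 : CT.sub x.1 t = some pc.2 := by rw [hx]; exact sub_child hs hpc
          refine ⟨pc, mem_of_getElem?' hpc, hcol, ?_, ?_⟩
          · exact (ih t x pc.2 hx2).1.mp ((hsub x).mp h1)
          · exact (ih t x pc.2 hx2).2.mp ((hsub2 x).mp h2)
        · rintro ⟨c, hc, hcol, h1, h2⟩
          rcases getElem?_of_mem' hc with ⟨i, hi⟩
          have hx2 : CT.sub (v.1 ++ [i]) t = some c.2 := sub_child hs hi
          refine ⟨⟨v.1 ++ [i], by rw [hx2]; rfl⟩, ?_, ?_, ?_⟩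
          · exact (hedge false _).mpr ((edge_iff hs false _).mpr ⟨i, c, hi, hcol, rfl⟩)
          · exact (hsub _).mpr ((ih t _ c.2 hx2).1.mpr h1)
          · exact (hsub2 _).mpr ((ih t _ c.2 hx2).2.mpr h2)
    | fa =>
      constructor
      · show (∀ x : t.Node, ¬ _ ∨ (_ ∨ _)) ↔ _
        constructor
        · intro h c hc hcol
          rcases getElem?_of_mem' hc with ⟨i, hi⟩
          have hx2 : CT.sub (v.1 ++ [i]) t = some c.2 := sub_child hs hi
          rcases h ⟨v.1 ++ [i], by rw [hx2]; rfl⟩ with hne | (h1 | h2)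
          · exact absurd ((hedge true _).mpr
              ((edge_iff hs true _).mpr ⟨i, c, hi, hcol, rfl⟩)) hne
          · exact Or.inl ((ih t _ c.2 hx2).1.mp ((hsub _).mp h1))
          · exact Or.inr ((ih t _ c.2 hx2).2.mp ((hsub2 _).mp h2))
        · intro h x
          by_cases he : t.edgeC true v.1 x.1
          · rcases (edge_iff hs true x.1).mp he with ⟨i, pc, hpc, hcol, hx⟩
            have hx2 : CT.sub x.1 t = some pc.2 := by rw [hx]; exact sub_child hs hpc
            rcases h pc (mem_of_getElem?' hpc) hcol with h1 | h2
            · exact Or.inr (Or.inl ((hsub x).mpr ((ih t x pc.2 hx2).1.mpr h1)))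
            · exact Or.inr (Or.inr ((hsub2 x).mpr ((ih t x pc.2 hx2).2.mpr h2)))
          · exact Or.inl fun hcon => he ((hedge true x).mp hcon)
      · show (∀ x : t.Node, ¬ _ ∨ (_ ∨ _)) ↔ _
        constructor
        · intro h c hc hcol
          rcases getElem?_of_mem' hc with ⟨i, hi⟩
          have hx2 : CT.sub (v.1 ++ [i]) t = some c.2 := sub_child hs hi
          rcases h ⟨v.1 ++ [i], by rw [hx2]; rfl⟩ with hne | (h1 | h2)
          · exact absurd ((hedge false _).mpr
              ((edge_iff hs false _).mpr ⟨i, c, hi, hcol, rfl⟩)) hne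
          · exact Or.inl ((ih t _ c.2 hx2).1.mp ((hsub _).mp h1))
          · exact Or.inr ((ih t _ c.2 hx2).2.mp ((hsub2 _).mp h2))
        · intro h x
          by_cases he : t.edgeC false v.1 x.1
          · rcases (edge_iff hs false x.1).mp he with ⟨i, pc, hpc, hcol, hx⟩
            have hx2 : CT.sub x.1 t = some pc.2 := by rw [hx]; exact sub_child hs hpc
            rcases h pc (mem_of_getElem?' hpc) hcol with h1 | h2
            · exact Or.inr (Or.inl ((hsub x).mpr ((ih t x pc.2 hx2).1.mpr h1)))
            · exact Or.inr (Or.inr ((hsub2 x).mpr ((ih t x pc.2 hx2).2.mpr h2)))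
          · exact Or.inl fun hcon => he ((hedge false x).mp hcon)

lemma ctsat_iff_sem (t : CT) (p : List Quant) :
    CTSat t (phiTil p) ↔ Sem true p t := by
  show (phiTil p).Realize t.Str (fun i => i.elim0) ↔ _
  rw [phiTil, realize_subst]
  have : (fun _ : Fin 1 => TermRealize t.Str (fun i : Fin 0 => i.elim0) rTerm)
      = fun _ : Fin 1 => t.rootNode := rfl
  rw [this]
  exact (realize_psi p t t.rootNode t rfl).1

theorem separating_sentence_tauPlus (p : List Quant) (hp : p ≠ []) (m : ℕ) (hm : 0 < m) :
    CTSat (Atil p m) (phiTil p) ∧ ¬ CTSat (Btil p m) (phiTil p) := by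
  match p, hp with
  | s :: q, _ =>
    obtain ⟨h1, h2⟩ := ABt_spec q s m
    exact ⟨(ctsat_iff_sem _ _).mpr h1, fun h => h2 ((ctsat_iff_sem _ _).mp h)⟩

end QSH
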